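/- Fix an integer k ≥ 2 and a real σ > 0. The normalizer C_σ(t) is larger for inputs t closer to the center of {1,…,k}: for t, t' ∈ {1,…,k}, if |2t − (k+1)| ≤ |2t' − (k+1)| then C_σ(t) ≥ C_σ(t'). -/

import Mathlib

/-- Unnormalized weight of the discrete exponential randomized-response
mechanism on `{1,…,k}`: `Q_σ(t,u) = exp(−|u−t|/(kσ))`. -/
noncomputable def rrWeight (k : ℕ) (σ : ℝ) (t u : ℕ) : ℝ :=
  Real.exp (-|(u : ℝ) - (t : ℝ)| / (k * σ))

/-- Normalizer `C_σ(t) = Σ_{v=1}^k exp(−|v−t|/(kσ))`. -/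
noncomputable def rrNorm (k : ℕ) (σ : ℝ) (t : ℕ) : ℝ :=
  ∑ v ∈ Finset.Icc 1 k, rrWeight k σ t v

/-- Randomization probability `P_σ(t,u) = Q_σ(t,u) / C_σ(t)`. -/
noncomputable def rrProb (k : ℕ) (σ : ℝ) (t u : ℕ) : ℝ :=
  rrWeight k σ t u / rrNorm k σ t

lemma rr_sum_closed (k : ℕ) (c : ℝ) (hc : 0 < c) (t : ℕ) (ht1 : 1 ≤ t) (htk : t ≤ k) :
    ∑ v ∈ Finset.Icc 1 k, Real.exp (-|(v : ℝ) - (t : ℝ)| * c)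
      = (1 + Real.exp (-c)
          - (Real.exp (-(t : ℝ) * c) + Real.exp (-((k : ℝ) + 1 - (t : ℝ)) * c)))
        / (1 - Real.exp (-c)) := by
  set r : ℝ := Real.exp (-c) with hr
  have hrne : r ≠ 1 := by
    intro h
    rw [hr, Real.exp_eq_one_iff] at h
    linarith
  have hsplit : ∑ v ∈ Finset.Icc 1 k, Real.exp (-|(v : ℝ) - (t : ℝ)| * c)
      = (∑ v ∈ Finset.Icc 1 t, Real.exp (-|(v : ℝ) - (t : ℝ)| * c))
        + ∑ v ∈ Finset.Icc (t + 1) k, Real.exp (-|(v : ℝ) - (t : ℝ)| * c) := by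
    rw [show Finset.Icc 1 k = Finset.Ioc 0 k from Finset.Icc_add_one_left_eq_Ioc 0 k,
      show Finset.Icc 1 t = Finset.Ioc 0 t from Finset.Icc_add_one_left_eq_Ioc 0 t,
      Finset.Icc_add_one_left_eq_Ioc t k]
    exact (Finset.sum_Ioc_consecutive _ (Nat.zero_le t) htk).symm
  rw [hsplit]
  have hS1 : ∑ v ∈ Finset.Icc 1 t, Real.exp (-|(v : ℝ) - (t : ℝ)| * c)
      = ∑ j ∈ Finset.range t, r ^ j := by
    rw [← Finset.Ico_add_one_right_eq_Icc, Finset.sum_Ico_eq_sum_range]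
    have hn : t + 1 - 1 = t := by omega
    rw [hn, ← Finset.sum_range_reflect (fun j => r ^ j) t]
    apply Finset.sum_congr rfl
    intro j hj
    have hjt : j < t := Finset.mem_range.mp hj
    have habs : |((1 + j : ℕ) : ℝ) - (t : ℝ)| = ((t - 1 - j : ℕ) : ℝ) := by
      have h1 : ((1 + j : ℕ) : ℝ) - (t : ℝ) ≤ 0 := by
        push_cast
        have : (1 : ℝ) + j ≤ t := by exact_mod_cast Nat.one_add_le_iff.mpr hjt
        linarith
      rw [abs_of_nonpos h1]
      push_cast [Nat.cast_sub (by omega : j ≤ t - 1), Nat.cast_sub (by omega : 1 ≤ t)]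
      ring
    rw [habs, hr, ← Real.exp_nat_mul]
    ring_nf
  have hS2 : ∑ v ∈ Finset.Icc (t + 1) k, Real.exp (-|(v : ℝ) - (t : ℝ)| * c)
      = r * ∑ j ∈ Finset.range (k - t), r ^ j := by
    rw [← Finset.Ico_add_one_right_eq_Icc, Finset.sum_Ico_eq_sum_range]
    have hn : k + 1 - (t + 1) = k - t := by omega
    rw [hn, Finset.mul_sum]
    apply Finset.sum_congr rfl
    intro j hj
    have habs : |((t + 1 + j : ℕ) : ℝ) - (t : ℝ)| = ((j : ℝ) + 1) := by
      push_cast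
      rw [show (t : ℝ) + 1 + (j : ℝ) - (t : ℝ) = (j : ℝ) + 1 by ring]
      exact abs_of_nonneg (by positivity)
    rw [habs, hr, ← Real.exp_nat_mul, ← Real.exp_add]
    congr 1
    push_cast
    ring
  have hrt : Real.exp (-(t : ℝ) * c) = r ^ t := by
    rw [hr, ← Real.exp_nat_mul]; ring_nf
  have hrkt : Real.exp (-((k : ℝ) + 1 - (t : ℝ)) * c) = r * r ^ (k - t) := by
    rw [hr, ← Real.exp_nat_mul, ← Real.exp_add]
    congr 1
    push_cast [Nat.cast_sub htk]
    ring
  rw [hS1, hS2, geom_sum_eq hrne, geom_sum_eq hrne, hrt, hrkt]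
  have h1r : r - 1 ≠ 0 := sub_ne_zero.mpr hrne
  have h1r' : 1 - r ≠ 0 := sub_ne_zero.mpr (fun h => hrne h.symm)
  field_simp
  ring

lemma rr_pair_mono (u v : ℝ) (h : |u| ≤ |v|) :
    Real.exp u + Real.exp (-u) ≤ Real.exp v + Real.exp (-v) := by
  have := Real.cosh_le_cosh.mpr h
  rw [Real.cosh_eq, Real.cosh_eq] at this
  linarith

/-- the normalizer `C_σ(t)` is larger for inputs `t` closer to
the center of `{1,…,k}`: if `|2t − (k+1)| ≤ |2t' − (k+1)|` then
`C_σ(t) ≥ C_σ(t')`. -/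
theorem rr_norm_center_max (k : ℕ) (hk : 2 ≤ k) (σ : ℝ) (hσ : 0 < σ) :
    ∀ t ∈ Finset.Icc 1 k, ∀ t' ∈ Finset.Icc 1 k,
      |2 * (t : ℝ) - ((k : ℝ) + 1)| ≤ |2 * (t' : ℝ) - ((k : ℝ) + 1)| →
        rrNorm k σ t ≥ rrNorm k σ t' := by
  intro t ht t' ht' hle
  obtain ⟨ht1, htk⟩ := Finset.mem_Icc.mp ht
  obtain ⟨ht1', htk'⟩ := Finset.mem_Icc.mp ht'
  have hkpos : (0 : ℝ) < k := by positivity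
  have hkσ : (0 : ℝ) < (k : ℝ) * σ := by positivity
  set c : ℝ := ((k : ℝ) * σ)⁻¹ with hc
  have hcpos : 0 < c := by positivity
  have hnorm : ∀ s : ℕ, 1 ≤ s → s ≤ k →
      rrNorm k σ s = (1 + Real.exp (-c)
          - (Real.exp (-(s : ℝ) * c) + Real.exp (-((k : ℝ) + 1 - (s : ℝ)) * c)))
        / (1 - Real.exp (-c)) := by
    intro s hs1 hsk
    rw [← rr_sum_closed k c hcpos s hs1 hsk]
    unfold rrNorm rrWeight
    apply Finset.sum_congr rfl
    intro v _
    rw [hc, div_eq_mul_inv]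
  rw [hnorm t ht1 htk, hnorm t' ht1' htk']
  have hr1 : Real.exp (-c) < 1 := Real.exp_lt_one_iff.mpr (by linarith)
  have hden : 0 < 1 - Real.exp (-c) := by linarith
  have hfac : ∀ s : ℝ, Real.exp (-s * c) + Real.exp (-((k : ℝ) + 1 - s) * c)
      = Real.exp (-((k : ℝ) + 1) * c / 2)
        * (Real.exp ((((k : ℝ) + 1) - 2 * s) * c / 2)
            + Real.exp (-((((k : ℝ) + 1) - 2 * s) * c / 2))) := by
    intro s
    rw [mul_add, ← Real.exp_add, ← Real.exp_add]
    congr 1 <;> ring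
  have habs : ∀ s : ℝ, |(((k : ℝ) + 1) - 2 * s) * c / 2| = |2 * s - ((k : ℝ) + 1)| * c / 2 := by
    intro s
    rw [abs_div, abs_mul, abs_of_pos hcpos, abs_sub_comm]
    norm_num
  have key : Real.exp (-(t : ℝ) * c) + Real.exp (-((k : ℝ) + 1 - (t : ℝ)) * c)
      ≤ Real.exp (-(t' : ℝ) * c) + Real.exp (-((k : ℝ) + 1 - (t' : ℝ)) * c) := by
    rw [hfac, hfac]
    apply mul_le_mul_of_nonneg_left _ (Real.exp_nonneg _)
    apply rr_pair_mono
    rw [habs, habs]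
    have : (0 : ℝ) ≤ c / 2 := by positivity
    calc |2 * (t : ℝ) - ((k : ℝ) + 1)| * c / 2
        = |2 * (t : ℝ) - ((k : ℝ) + 1)| * (c / 2) := by ring
      _ ≤ |2 * (t' : ℝ) - ((k : ℝ) + 1)| * (c / 2) := mul_le_mul_of_nonneg_right hle this
      _ = |2 * (t' : ℝ) - ((k : ℝ) + 1)| * c / 2 := by ring
  rw [ge_iff_le, div_le_div_iff_of_pos_right hden]
  nlinarith [key, hden]
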